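/- Let a > 0, κ > 0, χ > 0 and b > 2χ. Suppose ū, w : [0, ∞) → (0, ∞) are differentiable and satisfy, for all t ≥ 0, ū′(t) = χ ū(t)((ū(t))^κ − (w(t))^κ) + ū(t)(a − b(ū(t))^κ) and w′(t) = χ w(t)((w(t))^κ − (ū(t))^κ) + w(t)(a − b(w(t))^κ), and suppose w(0) ≤ (a/b)^{1/κ} ≤ ū(0). Then, setting ε₀ := κ (b − 2χ)(a/b)((w(0))^κ/(ū(0))^κ), one has 0 ≤ ln((ū(t))^κ/(w(t))^κ) ≤ e^{−ε₀ t} ln((ū(0))^κ/(w(0))^κ) for all t ≥ 0. -/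

import Mathlib

open Set Real Filter

lemma posPartSq_hasDerivAt (x : ℝ) :
    HasDerivAt (fun y : ℝ => max y 0 ^ 2) (2 * max x 0) x := by
  rcases lt_trichotomy x 0 with h | h | h
  · have hev : (fun y : ℝ => max y 0 ^ 2) =ᶠ[nhds x] fun _ => (0:ℝ) := by
      filter_upwards [eventually_lt_nhds h] with y hy
      rw [max_eq_right hy.le]; norm_num
    have h0 : HasDerivAt (fun _ : ℝ => (0:ℝ)) 0 x := hasDerivAt_const x 0
    have h1 := h0.congr_of_eventuallyEq hev
    simpa [max_eq_right h.le] using h1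
  · subst h
    rw [hasDerivAt_iff_isLittleO]
    have h0 : (fun y : ℝ => max y 0 ^ 2) =o[nhds (0:ℝ)] fun y => y := by
      rw [Asymptotics.isLittleO_iff]
      intro c hc
      filter_upwards [eventually_abs_sub_lt 0 hc] with y hy
      simp only [sub_zero] at hy
      have hm1 : max y 0 ≤ |y| := max_le (le_abs_self y) (abs_nonneg y)
      have hm0 : (0:ℝ) ≤ max y 0 := le_max_right _ _
      have : max y 0 ^ 2 ≤ |y| * |y| := by nlinarith
      have h2 : ‖max y 0 ^ 2‖ = max y 0 ^ 2 := by
        rw [Real.norm_eq_abs, abs_of_nonneg (by positivity)]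
      rw [h2, Real.norm_eq_abs]
      nlinarith [abs_nonneg y]
    simpa using h0
  · have hev : (fun y : ℝ => max y 0 ^ 2) =ᶠ[nhds x] fun y => y ^ 2 := by
      filter_upwards [eventually_gt_nhds h] with y hy
      rw [max_eq_left hy.le]
    have h1 := (hasDerivAt_pow 2 x).congr_of_eventuallyEq hev
    simpa [max_eq_left h.le] using h1

lemma posPartSq_comp {f : ℝ → ℝ} {f' : ℝ} {x : ℝ} (hf : HasDerivAt f f' x) :
    HasDerivAt (fun y => max (f y) 0 ^ 2) (2 * max (f x) 0 * f') x := by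
  have h := (posPartSq_hasDerivAt (f x)).comp x hf
  exact h

set_option maxHeartbeats 1000000 in
lemma inv_lemma (a b χ κ : ℝ) (ha : 0 < a) (hκ : 0 < κ) (hχ : 0 < χ) (hb0 : 0 < b)
    (p q : ℝ → ℝ) (hp0 : ∀ t, 0 ≤ t → 0 < p t) (hq0 : ∀ t, 0 ≤ t → 0 < q t)
    (hpd : ∀ t, 0 ≤ t → HasDerivWithinAt p
      (κ * p t * (χ * (p t - q t) + (a - b * p t))) (Set.Ici 0) t)
    (hqd : ∀ t, 0 ≤ t → HasDerivWithinAt q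
      (κ * q t * (χ * (q t - p t) + (a - b * q t))) (Set.Ici 0) t)
    (hpi : a / b ≤ p 0) (hqi : q 0 ≤ a / b) :
    ∀ t, 0 ≤ t → a / b ≤ p t ∧ q t ≤ a / b := by
  intro T hT
  have hcb : b * (a / b) = a := by field_simp
  have hcpos : 0 < a / b := div_pos ha hb0
  -- continuity
  have hpc : ContinuousOn p (Icc 0 T) := fun s hs =>
    ((hpd s hs.1).continuousWithinAt).mono (fun x hx => hx.1)
  have hqc : ContinuousOn q (Icc 0 T) := fun s hs =>
    ((hqd s hs.1).continuousWithinAt).mono (fun x hx => hx.1)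
  obtain ⟨C₁, hC₁⟩ := isCompact_Icc.exists_bound_of_continuousOn hpc
  obtain ⟨C₂, hC₂⟩ := isCompact_Icc.exists_bound_of_continuousOn hqc
  have hpM : ∀ s ∈ Icc (0:ℝ) T, p s ≤ max C₁ C₂ := fun s hs =>
    le_trans (le_trans (le_abs_self _) (hC₁ s hs)) (le_max_left _ _)
  have hqM : ∀ s ∈ Icc (0:ℝ) T, q s ≤ max C₁ C₂ := fun s hs =>
    le_trans (le_trans (le_abs_self _) (hC₂ s hs)) (le_max_right _ _)
  set M := max C₁ C₂ with hMdef
  have hM0 : 0 < M := lt_of_lt_of_le (hp0 0 le_rfl) (hpM 0 ⟨le_rfl, hT⟩)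
  set K := 4 * κ * χ * M with hKdef
  -- the Lyapunov function
  have hψd : ∀ s ∈ Ioo (0:ℝ) T,
      HasDerivAt (fun y => (max (a / b - p y) 0 ^ 2 + max (q y - a / b) 0 ^ 2) * Real.exp (-K * y))
        ((2 * max (a / b - p s) 0 * (0 - κ * p s * (χ * (p s - q s) + (a - b * p s)))
          + 2 * max (q s - a / b) 0 * (κ * q s * (χ * (q s - p s) + (a - b * q s))))
          * Real.exp (-K * s)
          + (max (a / b - p s) 0 ^ 2 + max (q s - a / b) 0 ^ 2) * (Real.exp (-K * s) * -K)) s := by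
    intro s hs
    have hpds : HasDerivAt p (κ * p s * (χ * (p s - q s) + (a - b * p s))) s :=
      (hpd s hs.1.le).hasDerivAt (Ici_mem_nhds hs.1)
    have hqds : HasDerivAt q (κ * q s * (χ * (q s - p s) + (a - b * q s))) s :=
      (hqd s hs.1.le).hasDerivAt (Ici_mem_nhds hs.1)
    have hAd := posPartSq_comp ((hasDerivAt_const s (a / b)).sub hpds)
    have hBd := posPartSq_comp (hqds.sub (hasDerivAt_const s (a / b)))
    have hφd := hAd.add hBd
    have hexp : HasDerivAt (fun y : ℝ => Real.exp (-K * y)) (Real.exp (-K * s) * -K) s := by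
      have h1 : HasDerivAt (fun y : ℝ => -K * y) (-K) s := by
        simpa using (hasDerivAt_id s).const_mul (-K)
      exact h1.exp
    have := hφd.mul hexp
    convert this using 1
    · rfl
    · rfl
    · rfl
    · simp only [Pi.add_apply, Pi.sub_apply]
      ring
  have hψc : ContinuousOn
      (fun y => (max (a / b - p y) 0 ^ 2 + max (q y - a / b) 0 ^ 2) * Real.exp (-K * y))
      (Icc 0 T) := by
    have hmaxc : Continuous (fun z : ℝ => max z 0 ^ 2) :=
      (continuous_id.max continuous_const).pow 2
    apply ContinuousOn.mul
    · exact (hmaxc.comp_continuousOn (continuousOn_const.sub hpc)).add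
        (hmaxc.comp_continuousOn (hqc.sub continuousOn_const))
    · exact (Real.continuous_exp.comp (continuous_const.mul continuous_id)).continuousOn
  have hanti : AntitoneOn
      (fun y => (max (a / b - p y) 0 ^ 2 + max (q y - a / b) 0 ^ 2) * Real.exp (-K * y))
      (Icc 0 T) := by
    apply antitoneOn_of_deriv_nonpos (convex_Icc 0 T) hψc
    · intro x hx
      rw [interior_Icc] at hx
      exact (hψd x hx).differentiableAt.differentiableWithinAt
    · intro x hx
      rw [interior_Icc] at hx
      rw [(hψd x hx).deriv]
      -- key inequality
      have hx0 : (0:ℝ) ≤ x := hx.1.le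
      have hxm : x ∈ Icc (0:ℝ) T := ⟨hx.1.le, hx.2.le⟩
      have hpx := hp0 x hx0
      have hqx := hq0 x hx0
      have hpxM := hpM x hxm
      have hqxM := hqM x hxm
      have hAnn : (0:ℝ) ≤ max (a / b - p x) 0 := le_max_right _ _
      have hBnn : (0:ℝ) ≤ max (q x - a / b) 0 := le_max_right _ _
      have hAle : a / b - p x ≤ max (a / b - p x) 0 := le_max_left _ _
      have hBle : q x - a / b ≤ max (q x - a / b) 0 := le_max_left _ _
      have h1 : max (a / b - p x) 0 * (0 - κ * p x * (χ * (p x - q x) + (a - b * p x)))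
          ≤ κ * χ * M * (max (a / b - p x) 0 * (max (a / b - p x) 0 + max (q x - a / b) 0)) := by
        rcases le_or_gt (a / b - p x) 0 with hcase | hcase
        · rw [max_eq_right hcase]; simp
        · have hAeq : max (a / b - p x) 0 = a / b - p x := max_eq_left hcase.le
          have habp : 0 ≤ a - b * p x := by nlinarith
          have hstep : 0 - κ * p x * (χ * (p x - q x) + (a - b * p x))
              ≤ κ * p x * (χ * (max (a / b - p x) 0 + max (q x - a / b) 0)) := by
            have hqp : q x - p x ≤ max (a / b - p x) 0 + max (q x - a / b) 0 := by
              rw [hAeq]; linarith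
            nlinarith [mul_nonneg (mul_nonneg hκ.le hpx.le) habp,
              mul_le_mul_of_nonneg_left (mul_le_mul_of_nonneg_left hqp hχ.le)
                (mul_nonneg hκ.le hpx.le)]
          have hfac : 0 ≤ max (a / b - p x) 0 := hAnn
          calc max (a / b - p x) 0 * (0 - κ * p x * (χ * (p x - q x) + (a - b * p x)))
              ≤ max (a / b - p x) 0 * (κ * p x * (χ * (max (a / b - p x) 0 + max (q x - a / b) 0)))
                := mul_le_mul_of_nonneg_left hstep hfac
            _ = (κ * χ * (max (a / b - p x) 0 * (max (a / b - p x) 0 + max (q x - a / b) 0))) * p x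
                := by ring
            _ ≤ (κ * χ * (max (a / b - p x) 0 * (max (a / b - p x) 0 + max (q x - a / b) 0))) * M
                := by
                  apply mul_le_mul_of_nonneg_left hpxM
                  have := mul_nonneg hAnn (add_nonneg hAnn hBnn)
                  positivity
            _ = κ * χ * M * (max (a / b - p x) 0 * (max (a / b - p x) 0 + max (q x - a / b) 0))
                := by ring
      have h2 : max (q x - a / b) 0 * (κ * q x * (χ * (q x - p x) + (a - b * q x)))
          ≤ κ * χ * M * (max (q x - a / b) 0 * (max (a / b - p x) 0 + max (q x - a / b) 0)) := by
        rcases le_or_gt (q x - a / b) 0 with hcase | hcase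
        · rw [max_eq_right hcase]; simp
        · have hBeq : max (q x - a / b) 0 = q x - a / b := max_eq_left hcase.le
          have habq : a - b * q x ≤ 0 := by nlinarith
          have hstep : κ * q x * (χ * (q x - p x) + (a - b * q x))
              ≤ κ * q x * (χ * (max (a / b - p x) 0 + max (q x - a / b) 0)) := by
            have hqp : q x - p x ≤ max (a / b - p x) 0 + max (q x - a / b) 0 := by
              rw [hBeq]; linarith
            nlinarith [mul_nonneg (mul_nonneg hκ.le hqx.le) (neg_nonneg.2 habq),
              mul_le_mul_of_nonneg_left (mul_le_mul_of_nonneg_left hqp hχ.le)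
                (mul_nonneg hκ.le hqx.le)]
          calc max (q x - a / b) 0 * (κ * q x * (χ * (q x - p x) + (a - b * q x)))
              ≤ max (q x - a / b) 0 * (κ * q x * (χ * (max (a / b - p x) 0 + max (q x - a / b) 0)))
                := mul_le_mul_of_nonneg_left hstep hBnn
            _ = (κ * χ * (max (q x - a / b) 0 * (max (a / b - p x) 0 + max (q x - a / b) 0))) * q x
                := by ring
            _ ≤ (κ * χ * (max (q x - a / b) 0 * (max (a / b - p x) 0 + max (q x - a / b) 0))) * M
                := by
                  apply mul_le_mul_of_nonneg_left hqxM
                  have := mul_nonneg hBnn (add_nonneg hAnn hBnn)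
                  positivity
            _ = κ * χ * M * (max (q x - a / b) 0 * (max (a / b - p x) 0 + max (q x - a / b) 0))
                := by ring
      have hkey : 2 * max (a / b - p x) 0 * (0 - κ * p x * (χ * (p x - q x) + (a - b * p x)))
          + 2 * max (q x - a / b) 0 * (κ * q x * (χ * (q x - p x) + (a - b * q x)))
          ≤ K * (max (a / b - p x) 0 ^ 2 + max (q x - a / b) 0 ^ 2) := by
        have hsq : 2 * (κ * χ * M) * ((max (a / b - p x) 0 + max (q x - a / b) 0)
            * (max (a / b - p x) 0 + max (q x - a / b) 0))
            ≤ K * (max (a / b - p x) 0 ^ 2 + max (q x - a / b) 0 ^ 2) := by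
          rw [hKdef]
          nlinarith [sq_nonneg (max (a / b - p x) 0 - max (q x - a / b) 0),
            mul_pos (mul_pos hκ hχ) hM0]
        nlinarith [h1, h2]
      have hE := Real.exp_pos (-K * x)
      have hφnn : 0 ≤ max (a / b - p x) 0 ^ 2 + max (q x - a / b) 0 ^ 2 := by positivity
      calc (2 * max (a / b - p x) 0 * (0 - κ * p x * (χ * (p x - q x) + (a - b * p x)))
          + 2 * max (q x - a / b) 0 * (κ * q x * (χ * (q x - p x) + (a - b * q x))))
          * Real.exp (-K * x)
          + (max (a / b - p x) 0 ^ 2 + max (q x - a / b) 0 ^ 2) * (Real.exp (-K * x) * -K)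
          = Real.exp (-K * x) *
            ((2 * max (a / b - p x) 0 * (0 - κ * p x * (χ * (p x - q x) + (a - b * p x)))
            + 2 * max (q x - a / b) 0 * (κ * q x * (χ * (q x - p x) + (a - b * q x))))
            - K * (max (a / b - p x) 0 ^ 2 + max (q x - a / b) 0 ^ 2)) := by ring
        _ ≤ 0 := mul_nonpos_of_nonneg_of_nonpos hE.le (by linarith)
  -- conclude
  have h0T := hanti ⟨le_rfl, hT⟩ ⟨hT, le_rfl⟩ hT
  have hA0 : max (a / b - p 0) 0 = 0 := max_eq_right (by linarith)
  have hB0 : max (q 0 - a / b) 0 = 0 := max_eq_right (by linarith)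
  simp only [hA0, hB0] at h0T
  norm_num at h0T
  have hE := Real.exp_pos (-(K * T))
  have hAnn : (0:ℝ) ≤ max (a / b - p T) 0 := le_max_right _ _
  have hBnn : (0:ℝ) ≤ max (q T - a / b) 0 := le_max_right _ _
  have hsum : max (a / b - p T) 0 ^ 2 + max (q T - a / b) 0 ^ 2 ≤ 0 := by
    nlinarith
  have hA : max (a / b - p T) 0 = 0 := by nlinarith [sq_nonneg (max (a / b - p T) 0), sq_nonneg (max (q T - a / b) 0)]
  have hB : max (q T - a / b) 0 = 0 := by nlinarith [sq_nonneg (max (a / b - p T) 0), sq_nonneg (max (q T - a / b) 0)]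
  constructor
  · have := max_eq_right_iff.mp hA
    linarith
  · have := max_eq_right_iff.mp hB
    linarith

set_option maxHeartbeats 1000000 in
/-- The explicit exponential decay estimate of Step 4 of the proof of
Theorem 6.1: with ε₀ = κ(b − 2χ)(a/b)(w(0)^κ/ū(0)^κ), one has
0 ≤ ln(ū(t)^κ/w(t)^κ) ≤ e^{−ε₀ t} ln(ū(0)^κ/w(0)^κ) for all t ≥ 0. -/
theorem stmt13 (a b χ κ : ℝ) (ha : 0 < a) (hκ : 0 < κ) (hχ : 0 < χ)
    (hb : 2 * χ < b)
    (ubar w : ℝ → ℝ)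
    (hub : ∀ t : ℝ, 0 ≤ t → 0 < ubar t)
    (hwb : ∀ t : ℝ, 0 ≤ t → 0 < w t)
    (hud : ∀ t : ℝ, 0 ≤ t →
      HasDerivWithinAt ubar
        (χ * ubar t * (ubar t ^ κ - w t ^ κ) + ubar t * (a - b * ubar t ^ κ))
        (Set.Ici 0) t)
    (hwd : ∀ t : ℝ, 0 ≤ t →
      HasDerivWithinAt w
        (χ * w t * (w t ^ κ - ubar t ^ κ) + w t * (a - b * w t ^ κ))
        (Set.Ici 0) t)
    (hw0 : w 0 ≤ (a / b) ^ (1 / κ)) (hu0 : (a / b) ^ (1 / κ) ≤ ubar 0) :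
    ∀ t : ℝ, 0 ≤ t →
      0 ≤ Real.log (ubar t ^ κ / w t ^ κ) ∧
      Real.log (ubar t ^ κ / w t ^ κ) ≤
        Real.exp (-(κ * (b - 2 * χ) * (a / b) * (w 0 ^ κ / ubar 0 ^ κ)) * t) *
          Real.log (ubar 0 ^ κ / w 0 ^ κ) := by
  have hb0 : 0 < b := by nlinarith
  have hc : 0 < a / b := div_pos ha hb0
  have hpt : ∀ s : ℝ, 0 ≤ s → 0 < ubar s ^ κ := fun s hs => Real.rpow_pos_of_pos (hub s hs) κ
  have hqt : ∀ s : ℝ, 0 ≤ s → 0 < w s ^ κ := fun s hs => Real.rpow_pos_of_pos (hwb s hs) κ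
  -- derivatives of p := ubar^κ, q := w^κ
  have hpd : ∀ s : ℝ, 0 ≤ s → HasDerivWithinAt (fun y => ubar y ^ κ)
      (κ * (ubar s ^ κ) * (χ * (ubar s ^ κ - w s ^ κ) + (a - b * ubar s ^ κ))) (Ici 0) s := by
    intro s hs
    have hu := hub s hs
    have h := (hud s hs).rpow_const (p := κ) (Or.inl hu.ne')
    have hmul : ubar s ^ (1:ℝ) * ubar s ^ (κ - 1) = ubar s ^ κ := by
      rw [← Real.rpow_add hu]; ring_nf
    rw [Real.rpow_one] at hmul
    convert h using 1
    rw [← hmul]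
    ring
  have hqd : ∀ s : ℝ, 0 ≤ s → HasDerivWithinAt (fun y => w y ^ κ)
      (κ * (w s ^ κ) * (χ * (w s ^ κ - ubar s ^ κ) + (a - b * w s ^ κ))) (Ici 0) s := by
    intro s hs
    have hw := hwb s hs
    have h := (hwd s hs).rpow_const (p := κ) (Or.inl hw.ne')
    have hmul : w s ^ (1:ℝ) * w s ^ (κ - 1) = w s ^ κ := by
      rw [← Real.rpow_add hw]; ring_nf
    rw [Real.rpow_one] at hmul
    convert h using 1
    rw [← hmul]
    ring
  -- initial conditions for p, q
  have hcκ : ((a / b) ^ (1 / κ)) ^ κ = a / b := by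
    have h := (Real.rpow_mul hc.le (1 / κ) κ).symm
    rwa [one_div_mul_cancel hκ.ne', Real.rpow_one] at h
  have hpi : a / b ≤ ubar 0 ^ κ := by
    calc a / b = ((a / b) ^ (1 / κ)) ^ κ := hcκ.symm
      _ ≤ ubar 0 ^ κ := Real.rpow_le_rpow (Real.rpow_nonneg hc.le _) hu0 hκ.le
  have hqi : w 0 ^ κ ≤ a / b := by
    calc w 0 ^ κ ≤ ((a / b) ^ (1 / κ)) ^ κ :=
          Real.rpow_le_rpow (hwb 0 le_rfl).le hw0 hκ.le
      _ = a / b := hcκ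
  have hinv := inv_lemma a b χ κ ha hκ hχ hb0 (fun y => ubar y ^ κ) (fun y => w y ^ κ)
    hpt hqt hpd hqd hpi hqi
  -- the log-difference L
  have hLd : ∀ s : ℝ, 0 ≤ s → HasDerivWithinAt
      (fun y => Real.log (ubar y ^ κ) - Real.log (w y ^ κ))
      (κ * (2 * χ - b) * (ubar s ^ κ - w s ^ κ)) (Ici 0) s := by
    intro s hs
    have h1 := (hpd s hs).log (hpt s hs).ne'
    have h2 := (hqd s hs).log (hqt s hs).ne'
    have h := h1.sub h2
    have hP := (hpt s hs).ne'
    have hQ := (hqt s hs).ne'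
    convert h using 1
    · rfl
    · rfl
    · rfl
    · field_simp
      ring
  have hLanti : AntitoneOn (fun y => Real.log (ubar y ^ κ) - Real.log (w y ^ κ)) (Ici 0) := by
    apply antitoneOn_of_deriv_nonpos (convex_Ici 0)
    · exact fun s hs => (hLd s hs).continuousWithinAt
    · intro x hx
      rw [interior_Ici] at hx
      exact ((hLd x hx.le).hasDerivAt (Ici_mem_nhds hx)).differentiableAt.differentiableWithinAt
    · intro x hx
      rw [interior_Ici] at hx
      rw [((hLd x hx.le).hasDerivAt (Ici_mem_nhds hx)).deriv]
      obtain ⟨hpc, hqc⟩ := hinv x hx.le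
      have hpc' : a / b ≤ ubar x ^ κ := hpc
      have hqc' : w x ^ κ ≤ a / b := hqc
      nlinarith [mul_nonneg hκ.le (sub_nonneg.2 (le_trans hqc' hpc'))]
  have hL0 : ∀ s : ℝ, 0 ≤ s → 0 ≤ Real.log (ubar s ^ κ) - Real.log (w s ^ κ) := by
    intro s hs
    obtain ⟨hpc, hqc⟩ := hinv s hs
    have hpc' : a / b ≤ ubar s ^ κ := hpc
    have hqc' : w s ^ κ ≤ a / b := hqc
    have := (Real.log_le_log_iff (hqt s hs) (hpt s hs)).mpr (le_trans hqc' hpc')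
    linarith
  -- lower bound for q
  have hqlow : ∀ s : ℝ, 0 ≤ s → a / b * (w 0 ^ κ / ubar 0 ^ κ) ≤ w s ^ κ := by
    intro s hs
    have hLs : Real.log (ubar s ^ κ) - Real.log (w s ^ κ)
        ≤ Real.log (ubar 0 ^ κ) - Real.log (w 0 ^ κ) :=
      hLanti (self_mem_Ici) hs hs
    have hdiv : ubar s ^ κ / w s ^ κ ≤ ubar 0 ^ κ / w 0 ^ κ := by
      rw [← Real.log_le_log_iff (div_pos (hpt s hs) (hqt s hs)) (div_pos (hpt 0 le_rfl) (hqt 0 le_rfl)),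
        Real.log_div (hpt s hs).ne' (hqt s hs).ne', Real.log_div (hpt 0 le_rfl).ne' (hqt 0 le_rfl).ne']
      exact hLs
    rw [div_le_div_iff₀ (hqt s hs) (hqt 0 le_rfl)] at hdiv
    obtain ⟨hpc, _⟩ := hinv s hs
    have hpc' : a / b ≤ ubar s ^ κ := hpc
    rw [← mul_div_assoc, div_le_iff₀ (hpt 0 le_rfl)]
    nlinarith [hqt 0 le_rfl, hqt s hs, hpt 0 le_rfl]
  -- main exponential estimate
  intro t ht
  refine ⟨?_, ?_⟩
  · rw [Real.log_div (hpt t ht).ne' (hqt t ht).ne']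
    exact hL0 t ht
  · set ε := κ * (b - 2 * χ) * (a / b) * (w 0 ^ κ / ubar 0 ^ κ) with hεdef
    have hKpos : 0 < κ * (b - 2 * χ) := by nlinarith
    have hψanti : AntitoneOn
        (fun y => Real.exp (ε * y) * (Real.log (ubar y ^ κ) - Real.log (w y ^ κ))) (Ici 0) := by
      apply antitoneOn_of_deriv_nonpos (convex_Ici 0)
      · apply ContinuousOn.mul
        · exact (Real.continuous_exp.comp (continuous_const.mul continuous_id)).continuousOn
        · exact fun s hs => (hLd s hs).continuousWithinAt
      · intro x hx
        rw [interior_Ici] at hx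
        have hexp : HasDerivAt (fun y : ℝ => Real.exp (ε * y)) (Real.exp (ε * x) * ε) x := by
          have h1 : HasDerivAt (fun y : ℝ => ε * y) ε x := by
            simpa using (hasDerivAt_id x).const_mul ε
          exact h1.exp
        exact (hexp.mul ((hLd x hx.le).hasDerivAt (Ici_mem_nhds hx))).differentiableAt.differentiableWithinAt
      · intro x hx
        rw [interior_Ici] at hx
        have hexp : HasDerivAt (fun y : ℝ => Real.exp (ε * y)) (Real.exp (ε * x) * ε) x := by
          have h1 : HasDerivAt (fun y : ℝ => ε * y) ε x := by
            simpa using (hasDerivAt_id x).const_mul ε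
          exact h1.exp
        erw [(hexp.mul ((hLd x hx.le).hasDerivAt (Ici_mem_nhds hx))).deriv]
        have hLx := hL0 x hx.le
        -- q * L ≤ p - q
        have hlog : Real.log (ubar x ^ κ) - Real.log (w x ^ κ) ≤ ubar x ^ κ / w x ^ κ - 1 := by
          have := Real.log_le_sub_one_of_pos (div_pos (hpt x hx.le) (hqt x hx.le))
          rwa [Real.log_div (hpt x hx.le).ne' (hqt x hx.le).ne'] at this
        have h1 : w x ^ κ * (Real.log (ubar x ^ κ) - Real.log (w x ^ κ)) ≤ ubar x ^ κ - w x ^ κ := by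
          have h := mul_le_mul_of_nonneg_left hlog (hqt x hx.le).le
          have hQ : w x ^ κ ≠ 0 := (hqt x hx.le).ne'
          have hPQ : w x ^ κ * (ubar x ^ κ / w x ^ κ - 1) = ubar x ^ κ - w x ^ κ := by
            field_simp
          rw [hPQ] at h
          exact h
        have h2 : ε ≤ κ * (b - 2 * χ) * w x ^ κ := by
          have := hqlow x hx.le
          rw [hεdef]
          calc κ * (b - 2 * χ) * (a / b) * (w 0 ^ κ / ubar 0 ^ κ)
              = κ * (b - 2 * χ) * (a / b * (w 0 ^ κ / ubar 0 ^ κ)) := by ring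
            _ ≤ κ * (b - 2 * χ) * w x ^ κ := mul_le_mul_of_nonneg_left this hKpos.le
        have hbr : ε * (Real.log (ubar x ^ κ) - Real.log (w x ^ κ))
            + κ * (2 * χ - b) * (ubar x ^ κ - w x ^ κ) ≤ 0 := by
          have c1 : ε * (Real.log (ubar x ^ κ) - Real.log (w x ^ κ))
              ≤ κ * (b - 2 * χ) * w x ^ κ * (Real.log (ubar x ^ κ) - Real.log (w x ^ κ)) :=
            mul_le_mul_of_nonneg_right h2 hLx
          have c2 : κ * (b - 2 * χ) * (w x ^ κ * (Real.log (ubar x ^ κ) - Real.log (w x ^ κ)))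
              ≤ κ * (b - 2 * χ) * (ubar x ^ κ - w x ^ κ) :=
            mul_le_mul_of_nonneg_left h1 hKpos.le
          nlinarith
        calc Real.exp (ε * x) * ε * (Real.log (ubar x ^ κ) - Real.log (w x ^ κ))
              + Real.exp (ε * x) * (κ * (2 * χ - b) * (ubar x ^ κ - w x ^ κ))
            = Real.exp (ε * x) * (ε * (Real.log (ubar x ^ κ) - Real.log (w x ^ κ))
              + κ * (2 * χ - b) * (ubar x ^ κ - w x ^ κ)) := by ring
          _ ≤ 0 := mul_nonpos_of_nonneg_of_nonpos (Real.exp_pos _).le hbr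
    have hfin := hψanti self_mem_Ici ht ht
    have hfin' : Real.exp (ε * t) * (Real.log (ubar t ^ κ) - Real.log (w t ^ κ))
        ≤ Real.log (ubar 0 ^ κ) - Real.log (w 0 ^ κ) := by simpa using hfin
    rw [Real.log_div (hpt t ht).ne' (hqt t ht).ne', Real.log_div (hpt 0 le_rfl).ne' (hqt 0 le_rfl).ne']
    have hmul := mul_le_mul_of_nonneg_left hfin' (Real.exp_pos (-ε * t)).le
    calc Real.log (ubar t ^ κ) - Real.log (w t ^ κ)
        = Real.exp (-ε * t) * (Real.exp (ε * t) *
            (Real.log (ubar t ^ κ) - Real.log (w t ^ κ))) := by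
          rw [← mul_assoc, ← Real.exp_add, neg_mul, neg_add_cancel, Real.exp_zero, one_mul]
      _ ≤ Real.exp (-ε * t) * (Real.log (ubar 0 ^ κ) - Real.log (w 0 ^ κ)) := hmul
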